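/- Let d ∈ 2ℕ and let Y ∈ ℓ₂(ℤ₊^{d/2} × ℤ₊^{d/2}) be such that both Y*Y and YY* are rapidly decreasing double sequences. Then Y itself is rapidly decreasing. Specifically, |y_{k,l}|² ≤ a_{l,l}^{1/2} b_{k,k}^{1/2} where Y*Y = (a_{k,l}) and YY* = (b_{k,l}). -/

import Mathlib

open scoped ENNReal ComplexConjugate

/-- The index set `ℤ₊^{d/2}`. -/
abbrev Idx (d : ℕ) := Fin (d / 2) → ℕ

/-- The seminorm `r_m(a) = (Σ_{k,l} (|k|+1)^{2m} (|l|+1)^{2m} |a_{k,l}|²)^{1/2}`. -/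
noncomputable def rsem (d m : ℕ) (a : Idx d → Idx d → ℂ) : ℝ≥0∞ :=
  (∑' k : Idx d, ∑' l : Idx d,
      ((∑ i, (k i : ℝ≥0∞)) + 1) ^ (2 * m) * ((∑ i, (l i : ℝ≥0∞)) + 1) ^ (2 * m) *
        (‖a k l‖₊ : ℝ≥0∞) ^ 2) ^ (1 / 2 : ℝ)

/-- A double sequence is rapidly decreasing if all seminorms `r_m` are finite. -/
def RapidlyDecreasing (d : ℕ) (a : Idx d → Idx d → ℂ) : Prop :=
  ∀ m : ℕ, rsem d m a < ⊤

/- ### Auxiliary lemmas -/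

/-- Sum over a pi type of a product equals a power of the sum. -/
lemma piTsumProd : ∀ (n : ℕ) (f : ℕ → ℝ≥0∞),
    ∑' l : Fin n → ℕ, ∏ i, f (l i) = (∑' j, f j) ^ n
  | 0, f => by
    rw [tsum_eq_single (fun i => i.elim0) (fun b hb => absurd (Subsingleton.elim b _) hb)]
    simp
  | n + 1, f => by
    rw [← (Fin.consEquiv (fun _ : Fin (n + 1) => ℕ)).tsum_eq, ENNReal.tsum_prod']
    have : ∀ (p : ℕ) (q : Fin n → ℕ),
        (∏ i, f ((Fin.consEquiv (fun _ : Fin (n + 1) => ℕ)) (p, q) i))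
          = f p * ∏ i, f (q i) := by
      intro p q
      simp [Fin.consEquiv, Fin.prod_univ_succ]
    simp_rw [this, ENNReal.tsum_mul_left, ENNReal.tsum_mul_right, piTsumProd n f, pow_succ,
      mul_comm]

lemma tsum_inv_sq_ne_top : (∑' j : ℕ, (((j : ℝ≥0∞) + 1) ^ 2)⁻¹) ≠ ⊤ := by
  have h1 : ∀ j : ℕ, (((j : ℝ≥0∞) + 1) ^ 2)⁻¹ = ENNReal.ofReal (((j : ℝ) + 1) ^ 2)⁻¹ := by
    intro j
    have hj : ((j : ℝ≥0∞) + 1) = ENNReal.ofReal ((j : ℝ) + 1) := by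
      rw [ENNReal.ofReal_add (by positivity) zero_le_one, ENNReal.ofReal_natCast,
        ENNReal.ofReal_one]
    rw [hj, ← ENNReal.ofReal_pow (by positivity), ← ENNReal.ofReal_inv_of_pos (by positivity)]
  have hs : Summable (fun j : ℕ => (((j : ℝ) + 1) ^ 2)⁻¹) := by
    have := (summable_nat_add_iff (f := fun n : ℕ => 1 / (n : ℝ) ^ 2) 1).2
      (Real.summable_one_div_nat_pow.2 one_lt_two)
    simpa [one_div, add_comm] using this
  calc (∑' j : ℕ, (((j : ℝ≥0∞) + 1) ^ 2)⁻¹)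
      = ∑' j : ℕ, ENNReal.ofReal (((j : ℝ) + 1) ^ 2)⁻¹ := by simp_rw [h1]
    _ = ENNReal.ofReal (∑' j : ℕ, (((j : ℝ) + 1) ^ 2)⁻¹) :=
        (ENNReal.ofReal_tsum_of_nonneg (fun j => by positivity) hs).symm
    _ ≠ ⊤ := ENNReal.ofReal_ne_top

/-- The weighted diagonal sum of the square root of a rapidly decreasing sequence
is finite. -/
lemma diag_sum_ne_top (d m : ℕ) (c : Idx d → Idx d → ℂ) (hc : RapidlyDecreasing d c) :
    (∑' l : Idx d, ((∑ i, (l i : ℝ≥0∞)) + 1) ^ (2 * m) *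
      (‖c l l‖₊ : ℝ≥0∞) ^ (1 / 2 : ℝ)) ≠ ⊤ := by
  set n := d / 2 with hn
  set M := 2 * m + 2 * n with hM
  set T := ∑' k : Idx d, ∑' l : Idx d,
      ((∑ i, (k i : ℝ≥0∞)) + 1) ^ (2 * M) * ((∑ i, (l i : ℝ≥0∞)) + 1) ^ (2 * M) *
        (‖c k l‖₊ : ℝ≥0∞) ^ 2 with hT
  have hTne : T ≠ ⊤ := by
    intro h
    have := hc M
    rw [rsem, ← hT, h, ENNReal.top_rpow_of_pos (by norm_num)] at this
    exact lt_irrefl ⊤ this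
  -- notation
  set L : Idx d → ℝ≥0∞ := fun l => (∑ i, (l i : ℝ≥0∞)) + 1 with hL
  have hL1 : ∀ l, 1 ≤ L l := fun l => le_add_self
  have hLlt : ∀ l, L l ≠ ⊤ := by
    intro l
    rw [hL]
    refine ENNReal.add_ne_top.2 ⟨?_, ENNReal.one_ne_top⟩
    exact (ENNReal.sum_lt_top.2 fun i _ => ENNReal.natCast_lt_top _).ne
  -- diagonal term bound
  have hdiag : ∀ l : Idx d,
      L l ^ (2 * M) * L l ^ (2 * M) * (‖c l l‖₊ : ℝ≥0∞) ^ 2 ≤ T := by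
    intro l
    calc L l ^ (2 * M) * L l ^ (2 * M) * (‖c l l‖₊ : ℝ≥0∞) ^ 2
        ≤ ∑' l' : Idx d, L l ^ (2 * M) * L l' ^ (2 * M) * (‖c l l'‖₊ : ℝ≥0∞) ^ 2 :=
          ENNReal.le_tsum l
      _ ≤ T := ENNReal.le_tsum l
  -- fourth root
  have hroot : ∀ l : Idx d,
      L l ^ M * (‖c l l‖₊ : ℝ≥0∞) ^ (1 / 2 : ℝ) ≤ T ^ (1 / 4 : ℝ) := by
    intro l
    have h4 : (L l ^ M * (‖c l l‖₊ : ℝ≥0∞) ^ (1 / 2 : ℝ)) ^ (4 : ℕ) ≤ T := by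
      have : (L l ^ M * (‖c l l‖₊ : ℝ≥0∞) ^ (1 / 2 : ℝ)) ^ (4 : ℕ)
          = L l ^ (2 * M) * L l ^ (2 * M) * (‖c l l‖₊ : ℝ≥0∞) ^ 2 := by
        rw [mul_pow, ← pow_mul]
        rw [← ENNReal.rpow_natCast ((‖c l l‖₊ : ℝ≥0∞) ^ (1 / 2 : ℝ)) 4,
          ← ENNReal.rpow_mul]
        norm_num
        rw [← pow_add]
        congr 1
        ring
      rw [this]
      exact hdiag l
    have := ENNReal.rpow_le_rpow (z := (1 / 4 : ℝ))
      (by exact_mod_cast h4) (by norm_num)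
    calc L l ^ M * (‖c l l‖₊ : ℝ≥0∞) ^ (1 / 2 : ℝ)
        = ((L l ^ M * (‖c l l‖₊ : ℝ≥0∞) ^ (1 / 2 : ℝ)) ^ (4 : ℕ)) ^ (1 / 4 : ℝ) := by
          rw [← ENNReal.rpow_natCast _ 4, ← ENNReal.rpow_mul]
          norm_num
      _ ≤ T ^ (1 / 4 : ℝ) := this
  -- pointwise bound with inverse product
  set g : ℕ → ℝ≥0∞ := fun j => (((j : ℝ≥0∞) + 1) ^ 2)⁻¹ with hg
  have hpt : ∀ l : Idx d,
      L l ^ (2 * m) * (‖c l l‖₊ : ℝ≥0∞) ^ (1 / 2 : ℝ)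
        ≤ T ^ (1 / 4 : ℝ) * ∏ i, g (l i) := by
    intro l
    set P : ℝ≥0∞ := ∏ i : Fin n, ((l i : ℝ≥0∞) + 1) ^ 2 with hP
    have hPL : P ≤ L l ^ (2 * n) := by
      have h1 : ∀ i ∈ Finset.univ, ((l i : ℝ≥0∞) + 1) ^ 2 ≤ L l ^ 2 := by
        intro i _
        refine pow_le_pow_left' ?_ 2
        rw [hL]
        exact add_le_add_left
          (Finset.single_le_sum (f := fun i : Fin n => ((l i : ℝ≥0∞)))
            (fun i _ => zero_le) (Finset.mem_univ i)) 1
      calc P ≤ ∏ _i : Fin n, L l ^ 2 := Finset.prod_le_prod' h1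
        _ = L l ^ (2 * n) := by
            rw [Finset.prod_const, Finset.card_univ, Fintype.card_fin, ← pow_mul, mul_comm]
    have hgP : (∏ i, g (l i)) * P = 1 := by
      rw [hP, ← Finset.prod_mul_distrib]
      refine Finset.prod_eq_one fun i _ => ?_
      rw [hg]
      refine ENNReal.inv_mul_cancel ?_ ?_
      · exact pow_ne_zero _ (ne_of_gt (lt_of_lt_of_le zero_lt_one le_add_self))
      · refine ENNReal.pow_ne_top ?_
        refine ENNReal.add_ne_top.2 ⟨ENNReal.natCast_ne_top _, ENNReal.one_ne_top⟩
    have key : P * (L l ^ (2 * m) * (‖c l l‖₊ : ℝ≥0∞) ^ (1 / 2 : ℝ)) ≤ T ^ (1 / 4 : ℝ) := by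
      calc P * (L l ^ (2 * m) * (‖c l l‖₊ : ℝ≥0∞) ^ (1 / 2 : ℝ))
          ≤ L l ^ (2 * n) * (L l ^ (2 * m) * (‖c l l‖₊ : ℝ≥0∞) ^ (1 / 2 : ℝ)) :=
            mul_le_mul_left hPL _
        _ = L l ^ M * (‖c l l‖₊ : ℝ≥0∞) ^ (1 / 2 : ℝ) := by
            rw [hM, pow_add]; ring
        _ ≤ T ^ (1 / 4 : ℝ) := hroot l
    calc L l ^ (2 * m) * (‖c l l‖₊ : ℝ≥0∞) ^ (1 / 2 : ℝ)
        = (∏ i, g (l i)) * (P * (L l ^ (2 * m) * (‖c l l‖₊ : ℝ≥0∞) ^ (1 / 2 : ℝ))) := by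
          rw [← mul_assoc, hgP, one_mul]
      _ ≤ (∏ i, g (l i)) * T ^ (1 / 4 : ℝ) := mul_le_mul_right key _
      _ = T ^ (1 / 4 : ℝ) * ∏ i, g (l i) := mul_comm _ _
  refine ne_top_of_le_ne_top ?_ (ENNReal.tsum_le_tsum hpt)
  rw [ENNReal.tsum_mul_left, piTsumProd n g]
  refine ENNReal.mul_ne_top ?_ ?_
  · exact (ENNReal.rpow_lt_top_of_nonneg (by norm_num) hTne).ne
  · exact ENNReal.pow_ne_top tsum_inv_sq_ne_top

/-- Let `Y ∈ ℓ₂(ℤ₊^{d/2} × ℤ₊^{d/2})` be such that both `Y*Y` and `YY*` are rapidly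
decreasing.  Then `Y` itself is rapidly decreasing, and moreover
`|y_{k,l}|² ≤ a_{l,l}^{1/2} b_{k,k}^{1/2}` where `a = Y*Y` and `b = YY*`. -/
theorem stmt9 (d : ℕ) (hd : 0 < d) (hde : Even d)
    (y : Idx d → Idx d → ℂ)
    (hy2 : rsem d 0 y ≠ ⊤)
    (a b : Idx d → Idx d → ℂ)
    (hadef : ∀ k l, a k l = ∑' j : Idx d, conj (y j k) * y j l)
    (hbdef : ∀ k l, b k l = ∑' j : Idx d, y k j * conj (y l j))
    (ha : RapidlyDecreasing d a) (hb : RapidlyDecreasing d b) :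
    RapidlyDecreasing d y ∧
      ∀ k l, (‖y k l‖₊ : ℝ≥0∞) ^ 2
        ≤ (‖a l l‖₊ : ℝ≥0∞) ^ (1 / 2 : ℝ) * (‖b k k‖₊ : ℝ≥0∞) ^ (1 / 2 : ℝ) := by
  -- the plain ℓ₂ sum is finite
  have hS0 : (∑' k : Idx d, ∑' l : Idx d, (‖y k l‖₊ : ℝ≥0∞) ^ 2) ≠ ⊤ := by
    intro h
    apply hy2
    rw [rsem]
    simp only [Nat.mul_zero, pow_zero, one_mul, h]
    exact ENNReal.top_rpow_of_pos (by norm_num)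
  -- column sums are finite
  have hcol : ∀ l, (∑' j : Idx d, (‖y j l‖₊ : ℝ≥0∞) ^ 2) ≠ ⊤ := by
    intro l
    refine ne_top_of_le_ne_top hS0 (ENNReal.tsum_le_tsum fun j => ?_)
    exact ENNReal.le_tsum l
  -- row sums are finite
  have hrow : ∀ k, (∑' j : Idx d, (‖y k j‖₊ : ℝ≥0∞) ^ 2) ≠ ⊤ := by
    intro k
    exact ne_top_of_le_ne_top hS0 (ENNReal.le_tsum k)
  -- real summability
  have hcolS : ∀ l, Summable (fun j : Idx d => ‖y j l‖ ^ 2) := by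
    intro l
    have : (∑' j : Idx d, ((‖y j l‖₊ ^ 2 : NNReal) : ℝ≥0∞)) ≠ ⊤ := by
      simpa [ENNReal.coe_pow] using hcol l
    have hs := ENNReal.tsum_coe_ne_top_iff_summable.1 this
    have := NNReal.summable_coe.2 hs
    simpa using this
  have hrowS : ∀ k, Summable (fun j : Idx d => ‖y k j‖ ^ 2) := by
    intro k
    have : (∑' j : Idx d, ((‖y k j‖₊ ^ 2 : NNReal) : ℝ≥0∞)) ≠ ⊤ := by
      simpa [ENNReal.coe_pow] using hrow k
    have hs := ENNReal.tsum_coe_ne_top_iff_summable.1 this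
    have := NNReal.summable_coe.2 hs
    simpa using this
  -- values of the diagonals
  have haval : ∀ l, a l l = (((∑' j : Idx d, ‖y j l‖ ^ 2) : ℝ) : ℂ) := by
    intro l
    rw [hadef l l, Complex.ofReal_tsum]
    congr 1
    funext j
    rw [← Complex.normSq_eq_conj_mul_self, Complex.normSq_eq_norm_sq]
  have hbval : ∀ k, b k k = (((∑' j : Idx d, ‖y k j‖ ^ 2) : ℝ) : ℂ) := by
    intro k
    rw [hbdef k k, Complex.ofReal_tsum]
    congr 1
    funext j
    rw [Complex.mul_conj, Complex.normSq_eq_norm_sq]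
  -- key pointwise bounds
  have keyA : ∀ k l, (‖y k l‖₊ : ℝ≥0∞) ^ 2 ≤ (‖a l l‖₊ : ℝ≥0∞) := by
    intro k l
    have h1 : ‖y k l‖ ^ 2 ≤ ∑' j : Idx d, ‖y j l‖ ^ 2 :=
      Summable.le_tsum (hcolS l) k fun j _ => sq_nonneg _
    have h2 : ‖a l l‖ = ∑' j : Idx d, ‖y j l‖ ^ 2 := by
      rw [haval l, Complex.norm_real, Real.norm_eq_abs,
        abs_of_nonneg (tsum_nonneg fun j => sq_nonneg _)]
    have : ‖y k l‖₊ ^ 2 ≤ ‖a l l‖₊ := by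
      rw [← NNReal.coe_le_coe]
      push_cast
      rw [h2]
      exact h1
    exact_mod_cast this
  have keyB : ∀ k l, (‖y k l‖₊ : ℝ≥0∞) ^ 2 ≤ (‖b k k‖₊ : ℝ≥0∞) := by
    intro k l
    have h1 : ‖y k l‖ ^ 2 ≤ ∑' j : Idx d, ‖y k j‖ ^ 2 :=
      Summable.le_tsum (hrowS k) l fun j _ => sq_nonneg _
    have h2 : ‖b k k‖ = ∑' j : Idx d, ‖y k j‖ ^ 2 := by
      rw [hbval k, Complex.norm_real, Real.norm_eq_abs,
        abs_of_nonneg (tsum_nonneg fun j => sq_nonneg _)]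
    have : ‖y k l‖₊ ^ 2 ≤ ‖b k k‖₊ := by
      rw [← NNReal.coe_le_coe]
      push_cast
      rw [h2]
      exact h1
    exact_mod_cast this
  -- the combined bound
  have keyAB : ∀ k l, (‖y k l‖₊ : ℝ≥0∞) ^ 2
      ≤ (‖a l l‖₊ : ℝ≥0∞) ^ (1 / 2 : ℝ) * (‖b k k‖₊ : ℝ≥0∞) ^ (1 / 2 : ℝ) := by
    intro k l
    have hx : (‖y k l‖₊ : ℝ≥0∞) ^ 2
        = ((‖y k l‖₊ : ℝ≥0∞) ^ 2) ^ (1 / 2 : ℝ) * ((‖y k l‖₊ : ℝ≥0∞) ^ 2) ^ (1 / 2 : ℝ) := by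
      rw [← ENNReal.rpow_add_of_nonneg _ _ (by norm_num) (by norm_num)]
      norm_num
    rw [hx]
    exact mul_le_mul'
      (ENNReal.rpow_le_rpow (keyA k l) (by norm_num))
      (ENNReal.rpow_le_rpow (keyB k l) (by norm_num))
  refine ⟨?_, keyAB⟩
  intro m
  rw [rsem]
  refine ENNReal.rpow_lt_top_of_nonneg (by norm_num) ?_
  set L : Idx d → ℝ≥0∞ := fun l => (∑ i, (l i : ℝ≥0∞)) + 1 with hL
  have hbound : (∑' k : Idx d, ∑' l : Idx d,
      L k ^ (2 * m) * L l ^ (2 * m) * (‖y k l‖₊ : ℝ≥0∞) ^ 2)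
      ≤ (∑' k : Idx d, L k ^ (2 * m) * (‖b k k‖₊ : ℝ≥0∞) ^ (1 / 2 : ℝ)) *
        (∑' l : Idx d, L l ^ (2 * m) * (‖a l l‖₊ : ℝ≥0∞) ^ (1 / 2 : ℝ)) := by
    calc (∑' k : Idx d, ∑' l : Idx d,
          L k ^ (2 * m) * L l ^ (2 * m) * (‖y k l‖₊ : ℝ≥0∞) ^ 2)
        ≤ ∑' k : Idx d, ∑' l : Idx d,
            (L k ^ (2 * m) * (‖b k k‖₊ : ℝ≥0∞) ^ (1 / 2 : ℝ)) *
              (L l ^ (2 * m) * (‖a l l‖₊ : ℝ≥0∞) ^ (1 / 2 : ℝ)) := by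
          refine ENNReal.tsum_le_tsum fun k => ENNReal.tsum_le_tsum fun l => ?_
          calc L k ^ (2 * m) * L l ^ (2 * m) * (‖y k l‖₊ : ℝ≥0∞) ^ 2
              ≤ L k ^ (2 * m) * L l ^ (2 * m) *
                  ((‖a l l‖₊ : ℝ≥0∞) ^ (1 / 2 : ℝ) * (‖b k k‖₊ : ℝ≥0∞) ^ (1 / 2 : ℝ)) :=
                mul_le_mul_right (keyAB k l) _
            _ = (L k ^ (2 * m) * (‖b k k‖₊ : ℝ≥0∞) ^ (1 / 2 : ℝ)) *
                  (L l ^ (2 * m) * (‖a l l‖₊ : ℝ≥0∞) ^ (1 / 2 : ℝ)) := by ring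
      _ = (∑' k : Idx d, L k ^ (2 * m) * (‖b k k‖₊ : ℝ≥0∞) ^ (1 / 2 : ℝ)) *
            (∑' l : Idx d, L l ^ (2 * m) * (‖a l l‖₊ : ℝ≥0∞) ^ (1 / 2 : ℝ)) := by
          simp_rw [ENNReal.tsum_mul_left, ENNReal.tsum_mul_right]
  refine ne_top_of_le_ne_top ?_ hbound
  exact ENNReal.mul_ne_top (diag_sum_ne_top d m b hb) (diag_sum_ne_top d m a ha)
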